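/- arXiv:1808.08056 — 2 statements merged into one kernel-verified Lean document; each statement's English description precedes it below -/
import Mathlib

section
/- Let $q_1,\ldots,q_J, \tilde{q}_1,\ldots,\tilde{q}_J$ be complex numbers. Then $\big(\sum_j |q_j|^4\big)\big(\sum_j |\tilde{q}_j|^4\big) \le \Big(\big(\sum_j |q_j|^2\big)\big(\sum_j |\tilde{q}_j|^2\big) - \sum_{i\ne j} q_i q_j^* \tilde{q}_i^* \tilde{q}_j\Big)^2$, with equality when $q_j = \tilde{q}_j$ for all $j$. -/
open Finset

lemma sum_offDiag_split {n : ℕ} (h : Fin n × Fin n → ℝ) :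
    ∑ p ∈ Finset.univ.offDiag, h p = (∑ i, ∑ j, h (i, j)) - ∑ i, h (i, i) := by
  have h1 := Finset.sum_union (f := h) (Finset.disjoint_diag_offDiag (univ : Finset (Fin n)))
  rw [Finset.diag_union_offDiag, Finset.sum_diag, Finset.sum_product] at h1
  linarith

lemma sum_offDiag_mul {n : ℕ} (f g : Fin n → ℝ) :
    ∑ p ∈ Finset.univ.offDiag, f p.1 * g p.2
      = (∑ i, f i) * (∑ i, g i) - ∑ i, f i * g i := by
  rw [sum_offDiag_split (fun p => f p.1 * g p.2), Fintype.sum_mul_sum]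

lemma lagrange_offDiag {n : ℕ} (f g : Fin n → ℝ) :
    ∑ p ∈ Finset.univ.offDiag, (f p.1 * g p.2 - f p.2 * g p.1) ^ 2
      = 2 * ((∑ i, f i ^ 2) * (∑ i, g i ^ 2) - (∑ i, f i * g i) ^ 2) := by
  have e : ∑ p ∈ Finset.univ.offDiag, (f p.1 * g p.2 - f p.2 * g p.1) ^ 2
      = (∑ p ∈ Finset.univ.offDiag, (f p.1 ^ 2) * (g p.2 ^ 2))
        + (∑ p ∈ Finset.univ.offDiag, (g p.1 ^ 2) * (f p.2 ^ 2))
        - 2 * ∑ p ∈ Finset.univ.offDiag, (f p.1 * g p.1) * (f p.2 * g p.2) := by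
    rw [Finset.mul_sum, ← Finset.sum_add_distrib, ← Finset.sum_sub_distrib]
    exact Finset.sum_congr rfl (fun p _ => by ring)
  rw [e, sum_offDiag_mul (fun i => f i ^ 2) (fun i => g i ^ 2),
    sum_offDiag_mul (fun i => g i ^ 2) (fun i => f i ^ 2),
    sum_offDiag_mul (fun i => f i * g i) (fun i => f i * g i)]
  have h1 : ∑ i, f i * g i * (f i * g i) = ∑ i, f i ^ 2 * g i ^ 2 :=
    Finset.sum_congr rfl (fun i _ => by ring)
  have h2 : ∑ i, g i ^ 2 * f i ^ 2 = ∑ i, f i ^ 2 * g i ^ 2 :=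
    Finset.sum_congr rfl (fun i _ => by ring)
  rw [h1, h2]
  ring

lemma real_core {n : ℕ} (u v : Fin n → ℝ) :
    0 ≤ (∑ i, u i ^ 2) * (∑ i, v i ^ 2)
        - ∑ p ∈ Finset.univ.offDiag, (u p.1 * v p.1) * (u p.2 * v p.2)
    ∧ (∑ i, u i ^ 4) * (∑ i, v i ^ 4) ≤
      ((∑ i, u i ^ 2) * (∑ i, v i ^ 2)
        - ∑ p ∈ Finset.univ.offDiag, (u p.1 * v p.1) * (u p.2 * v p.2)) ^ 2 := by
  classical
  set d : Fin n × Fin n → ℝ := fun p => u p.1 * v p.2 - u p.2 * v p.1 with hd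
  set E := ∑ p ∈ Finset.univ.offDiag, d p ^ 2 with hE
  set M := ∑ i, u i ^ 2 * v i ^ 2 with hM
  -- W = P² - M'
  have hW : ∑ p ∈ Finset.univ.offDiag, (u p.1 * v p.1) * (u p.2 * v p.2)
      = (∑ i, u i * v i) ^ 2 - M := by
    rw [sum_offDiag_mul (fun i => u i * v i) (fun i => u i * v i), hM, ← sq]
    have : ∑ i, (u i * v i) * (u i * v i) = ∑ i, u i ^ 2 * v i ^ 2 :=
      Finset.sum_congr rfl (fun i _ => by ring)
    rw [this]
  have hEeq : E = 2 * ((∑ i, u i ^ 2) * (∑ i, v i ^ 2) - (∑ i, u i * v i) ^ 2) :=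
    lagrange_offDiag u v
  -- L = M + E/2
  have hL : (∑ i, u i ^ 2) * (∑ i, v i ^ 2)
      - ∑ p ∈ Finset.univ.offDiag, (u p.1 * v p.1) * (u p.2 * v p.2) = M + E / 2 := by
    rw [hW, hEeq]; ring
  -- second Lagrange: F = 2(AB - M²)
  have hF : ∑ p ∈ Finset.univ.offDiag, (u p.1 ^ 2 * v p.2 ^ 2 - u p.2 ^ 2 * v p.1 ^ 2) ^ 2
      = 2 * ((∑ i, u i ^ 4) * (∑ i, v i ^ 4) - M ^ 2) := by
    have := lagrange_offDiag (fun i => u i ^ 2) (fun i => v i ^ 2)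
    rw [this, hM]
    have h1 : ∑ i, (u i ^ 2) ^ 2 = ∑ i, u i ^ 4 := Finset.sum_congr rfl (fun i _ => by ring)
    have h2 : ∑ i, (v i ^ 2) ^ 2 = ∑ i, v i ^ 4 := Finset.sum_congr rfl (fun i _ => by ring)
    rw [h1, h2]
  -- pointwise bound: F ≤ D4 + 2 M E
  have hMnonneg : (0:ℝ) ≤ M := Finset.sum_nonneg (fun i _ => by positivity)
  have hEnonneg : (0:ℝ) ≤ E := Finset.sum_nonneg (fun p _ => sq_nonneg _)
  have hF_le : ∑ p ∈ Finset.univ.offDiag, (u p.1 ^ 2 * v p.2 ^ 2 - u p.2 ^ 2 * v p.1 ^ 2) ^ 2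
      ≤ (∑ p ∈ Finset.univ.offDiag, d p ^ 4) + 2 * M * E := by
    rw [hE, Finset.mul_sum, ← Finset.sum_add_distrib]
    apply Finset.sum_le_sum
    intro p hp
    have hpmem := Finset.mem_offDiag.1 hp
    have hij : p.1 ≠ p.2 := hpmem.2.2
    have hMge : (u p.1 * v p.1) ^ 2 + (u p.2 * v p.2) ^ 2 ≤ M := by
      rw [hM]
      have hsub : ({p.1, p.2} : Finset (Fin n)) ⊆ Finset.univ := Finset.subset_univ _
      have := Finset.sum_le_sum_of_subset_of_nonneg hsub
        (fun i _ _ => (by positivity : (0:ℝ) ≤ u i ^ 2 * v i ^ 2))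
      rw [Finset.sum_pair hij] at this
      calc (u p.1 * v p.1) ^ 2 + (u p.2 * v p.2) ^ 2
          = u p.1 ^ 2 * v p.1 ^ 2 + u p.2 ^ 2 * v p.2 ^ 2 := by ring
        _ ≤ M := this
    have key : (u p.1 ^ 2 * v p.2 ^ 2 - u p.2 ^ 2 * v p.1 ^ 2) ^ 2
        = d p ^ 4 + 4 * (u p.1 * v p.1) * (u p.2 * v p.2) * d p ^ 2 := by
      rw [hd]; ring
    nlinarith [sq_nonneg (d p), sq_nonneg (u p.1 * v p.1 - u p.2 * v p.2),
      mul_nonneg (sq_nonneg (d p)) (sub_nonneg.2 hMge)]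
  -- 2 * D4 ≤ E²
  have hD4 : 2 * (∑ p ∈ Finset.univ.offDiag, d p ^ 4) ≤ E ^ 2 := by
    rw [sq, hE, Finset.sum_mul, Finset.mul_sum]
    apply Finset.sum_le_sum
    intro p hp
    have hpmem := Finset.mem_offDiag.1 hp
    have hij : p.1 ≠ p.2 := hpmem.2.2
    have hswap : p.swap ∈ Finset.univ.offDiag :=
      Finset.mem_offDiag.2 ⟨Finset.mem_univ _, Finset.mem_univ _, fun hc => hij hc.symm⟩
    have hne : p ≠ p.swap := by
      intro hc
      exact hij (by rw [Prod.ext_iff] at hc; exact hc.1.trans rfl)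
    have hdsw : d p.swap ^ 2 = d p ^ 2 := by rw [hd]; simp [Prod.swap]; ring
    have hsub : ({p, p.swap} : Finset (Fin n × Fin n)) ⊆ Finset.univ.offDiag := by
      intro x hx
      rcases Finset.mem_insert.1 hx with h | h
      · rwa [h]
      · rw [Finset.mem_singleton.1 h]; exact hswap
    have hEge : d p ^ 2 + d p.swap ^ 2 ≤ E := by
      have h5 := Finset.sum_le_sum_of_subset_of_nonneg hsub (fun i _ _ => sq_nonneg (d i))
      rw [Finset.sum_pair hne] at h5
      rw [hE]; exact h5
    rw [hdsw] at hEge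
    calc 2 * d p ^ 4 = d p ^ 2 * (2 * d p ^ 2) := by ring
      _ ≤ d p ^ 2 * E := mul_le_mul_of_nonneg_left (by linarith) (sq_nonneg _)
  constructor
  · rw [hL]; linarith
  · rw [hL]
    nlinarith [hF, hF_le, hD4, hMnonneg, hEnonneg]

open Finset in
theorem subgaussian_majorization_core
    (J : ℕ) (q qt : Fin J → ℂ) :
    (∑ j, ‖q j‖ ^ 4) * (∑ j, ‖qt j‖ ^ 4) ≤
        ((∑ j, ‖q j‖ ^ 2) * (∑ j, ‖qt j‖ ^ 2) -
          (∑ p ∈ Finset.univ.offDiag,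
              q p.1 * star (q p.2) * star (qt p.1) * qt p.2).re) ^ 2 ∧
      ((∀ j, q j = qt j) →
        (∑ j, ‖q j‖ ^ 4) * (∑ j, ‖qt j‖ ^ 4) =
          ((∑ j, ‖q j‖ ^ 2) * (∑ j, ‖qt j‖ ^ 2) -
            (∑ p ∈ Finset.univ.offDiag,
                q p.1 * star (q p.2) * star (qt p.1) * qt p.2).re) ^ 2) := by
  have hre : (∑ p ∈ Finset.univ.offDiag,
      q p.1 * star (q p.2) * star (qt p.1) * qt p.2).re
      = ∑ p ∈ Finset.univ.offDiag,
        (q p.1 * star (q p.2) * star (qt p.1) * qt p.2).re :=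
    Complex.re_sum _ _
  constructor
  · -- inequality
    set u : Fin J → ℝ := fun j => ‖q j‖ with hu
    set v : Fin J → ℝ := fun j => ‖qt j‖ with hv
    obtain ⟨h0, h2⟩ := real_core u v
    have hT_le : (∑ p ∈ Finset.univ.offDiag,
        q p.1 * star (q p.2) * star (qt p.1) * qt p.2).re
        ≤ ∑ p ∈ Finset.univ.offDiag, (u p.1 * v p.1) * (u p.2 * v p.2) := by
      rw [hre]
      apply Finset.sum_le_sum
      intro p _
      calc (q p.1 * star (q p.2) * star (qt p.1) * qt p.2).re
          ≤ ‖q p.1 * star (q p.2) * star (qt p.1) * qt p.2‖ :=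
            Complex.re_le_norm _
        _ = (u p.1 * v p.1) * (u p.2 * v p.2) := by
            simp [hu, hv, norm_mul, norm_star]
            ring
    have h3 : (∑ i, u i ^ 2) * (∑ i, v i ^ 2)
        - ∑ p ∈ Finset.univ.offDiag, (u p.1 * v p.1) * (u p.2 * v p.2)
        ≤ (∑ i, u i ^ 2) * (∑ i, v i ^ 2)
          - (∑ p ∈ Finset.univ.offDiag,
              q p.1 * star (q p.2) * star (qt p.1) * qt p.2).re := by
      linarith
    calc (∑ j, u j ^ 4) * (∑ j, v j ^ 4)
        ≤ ((∑ i, u i ^ 2) * (∑ i, v i ^ 2)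
          - ∑ p ∈ Finset.univ.offDiag, (u p.1 * v p.1) * (u p.2 * v p.2)) ^ 2 := h2
      _ ≤ ((∑ j, u j ^ 2) * (∑ j, v j ^ 2)
          - (∑ p ∈ Finset.univ.offDiag,
              q p.1 * star (q p.2) * star (qt p.1) * qt p.2).re) ^ 2 :=
        pow_le_pow_left₀ h0 h3 2
  · -- equality case
    intro h
    obtain rfl : q = qt := funext h
    set a : Fin J → ℝ := fun j => ‖q j‖ ^ 2 with ha
    have hT : (∑ p ∈ Finset.univ.offDiag,
        q p.1 * star (q p.2) * star (q p.1) * q p.2).re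
        = ∑ p ∈ Finset.univ.offDiag, a p.1 * a p.2 := by
      rw [hre]
      apply Finset.sum_congr rfl
      intro p _
      have e1 : q p.1 * star (q p.2) * star (q p.1) * q p.2
          = ((Complex.normSq (q p.1) : ℂ)) * ((Complex.normSq (q p.2) : ℂ)) := by
        rw [← Complex.mul_conj, ← Complex.mul_conj]
        simp [Complex.star_def]
        ring
      rw [e1, ha]
      rw [← Complex.ofReal_mul, Complex.ofReal_re, Complex.normSq_eq_norm_sq,
        Complex.normSq_eq_norm_sq]
    rw [hT, sum_offDiag_mul a a]
    have h4 : ∑ j, ‖q j‖ ^ 4 = ∑ j, a j * a j :=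
      Finset.sum_congr rfl (fun j _ => by rw [ha]; ring)
    have h5 : ∑ j, ‖q j‖ ^ 2 = ∑ j, a j := rfl
    rw [h4, h5]
    ring
end

section
/- Let $J \ge 1$, $x_1,\ldots,x_J \in \mathbb{C}^N$, $r_1,\ldots,r_J > 0$, and $\tilde{w} \in \mathbb{C}^N$. Define $H = [\frac{1}{r_1}x_1, \ldots, \frac{1}{r_J}x_J] \in \mathbb{C}^{N\times J}$, $\tilde{q} = H^H \tilde{w}$, assume $\tilde{q} \ne 0$, define the $J\times J$ matrix $\tilde{Q}$ with diagonal entries $\|\tilde{q}\|^2$ and off-diagonal entries $-\tilde{q}_i\tilde{q}_j^*$, and set $G = \frac{1}{\sqrt{J \sum_j |\tilde{q}_j|^4}} H \tilde{Q} H^H$. Then for all $w \in \mathbb{C}^N$, $\frac{1}{J}\sum_{j=1}^J \frac{|w^H x_j|^4}{r_j^4} \le (w^H G w)^2$, with equality when $w = \tilde{w}$. -/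
open Matrix

section helpers
open Finset

lemma pair_sum_le {J : ℕ} (f : Fin J → ℝ) (hf : ∀ i, 0 ≤ f i) {i j : Fin J} (hij : i ≠ j) :
    f i + f j ≤ ∑ k, f k := by
  have h1 : ({i, j} : Finset (Fin J)) ⊆ univ := subset_univ _
  have h2 : ∑ k ∈ ({i, j} : Finset (Fin J)), f k = f i + f j := Finset.sum_pair hij
  calc f i + f j = ∑ k ∈ ({i, j} : Finset (Fin J)), f k := h2.symm
    _ ≤ ∑ k, f k := Finset.sum_le_sum_of_subset_of_nonneg h1 (fun k _ _ => hf k)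

set_option maxHeartbeats 1000000 in
lemma core_ineq {J : ℕ} (p s : Fin J → ℝ) (hp : ∀ i, 0 ≤ p i) (hs : ∀ i, 0 ≤ s i) :
    Real.sqrt ((∑ i, p i ^ 2) * (∑ i, s i ^ 2)) ≤
      (∑ i, p i) * (∑ i, s i) - (∑ i, Real.sqrt (p i * s i)) ^ 2 + ∑ i, p i * s i := by
  set A := ∑ i, p i ^ 2 with hA
  set B := ∑ i, s i ^ 2 with hB
  set D := ∑ i, p i * s i with hD
  have hA0 : 0 ≤ A := Finset.sum_nonneg fun i _ => sq_nonneg _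
  have hB0 : 0 ≤ B := Finset.sum_nonneg fun i _ => sq_nonneg _
  have hD0 : 0 ≤ D := Finset.sum_nonneg fun i _ => mul_nonneg (hp i) (hs i)
  have hR0 : 0 ≤ Real.sqrt (A * B) := Real.sqrt_nonneg _
  have hRsq : Real.sqrt (A * B) * Real.sqrt (A * B) = A * B :=
    Real.mul_self_sqrt (mul_nonneg hA0 hB0)
  -- per-term bound
  have perterm : ∀ i j : Fin J,
      (p i * s j - p j * s i) ^ 2 ≤
        (Real.sqrt (p i * s j) - Real.sqrt (p j * s i)) ^ 2 * (Real.sqrt (A * B) + D) := by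
    intro i j
    rcases eq_or_ne i j with rfl | hij
    · simp
    · set x := p i * s j with hx
      set y := p j * s i with hy
      have hx0 : 0 ≤ x := mul_nonneg (hp i) (hs j)
      have hy0 : 0 ≤ y := mul_nonneg (hp j) (hs i)
      have hsx : Real.sqrt x ^ 2 = x := Real.sq_sqrt hx0
      have hsy : Real.sqrt y ^ 2 = y := Real.sq_sqrt hy0
      have hfactor : (Real.sqrt x + Real.sqrt y) ^ 2 ≤ Real.sqrt (A * B) + D := by
        have hxy : Real.sqrt x * Real.sqrt y = Real.sqrt (p i * s i) * Real.sqrt (p j * s j) := by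
          rw [← Real.sqrt_mul hx0, ← Real.sqrt_mul (mul_nonneg (hp i) (hs i))]
          rw [hx, hy]; ring_nf
        have h1 : 2 * (Real.sqrt x * Real.sqrt y) ≤ p i * s i + p j * s j := by
          rw [hxy]
          nlinarith [sq_nonneg (Real.sqrt (p i * s i) - Real.sqrt (p j * s j)),
            Real.sq_sqrt (mul_nonneg (hp i) (hs i)), Real.sq_sqrt (mul_nonneg (hp j) (hs j))]
        have h2 : x + y ≤ Real.sqrt (A * B) := by
          have hxy2 : (x + y) ^ 2 ≤ (p i ^ 2 + p j ^ 2) * (s i ^ 2 + s j ^ 2) := by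
            nlinarith [sq_nonneg (p i * s i - p j * s j)]
          have hPA : p i ^ 2 + p j ^ 2 ≤ A := pair_sum_le (fun k => p k ^ 2) (fun k => sq_nonneg _) hij
          have hSB : s i ^ 2 + s j ^ 2 ≤ B := pair_sum_le (fun k => s k ^ 2) (fun k => sq_nonneg _) hij
          have : (x + y) ^ 2 ≤ A * B := by
            calc (x + y) ^ 2 ≤ (p i ^ 2 + p j ^ 2) * (s i ^ 2 + s j ^ 2) := hxy2
              _ ≤ A * B := by
                apply mul_le_mul hPA hSB (by positivity) hA0
          have h2' : Real.sqrt ((x+y)^2) ≤ Real.sqrt (A*B) := Real.sqrt_le_sqrt this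
          rwa [Real.sqrt_sq (by positivity)] at h2'
        have h3 : p i * s i + p j * s j ≤ D := pair_sum_le (fun k => p k * s k) (fun k => mul_nonneg (hp k) (hs k)) hij
        nlinarith [hsx, hsy]
      have hdiff : (Real.sqrt x - Real.sqrt y) * (Real.sqrt x + Real.sqrt y) = x - y := by
        nlinarith [hsx, hsy]
      calc (x - y)^2 = (Real.sqrt x - Real.sqrt y) ^ 2 * (Real.sqrt x + Real.sqrt y) ^ 2 := by
            rw [← mul_pow, hdiff]
        _ ≤ (Real.sqrt x - Real.sqrt y) ^ 2 * (Real.sqrt (A*B) + D) :=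
            mul_le_mul_of_nonneg_left hfactor (sq_nonneg _)
  set C := ∑ i, Real.sqrt (p i * s i) with hC
  have sqrtmul : ∀ i j : Fin J, Real.sqrt (p i * s j) * Real.sqrt (p j * s i)
      = Real.sqrt (p i * s i) * Real.sqrt (p j * s j) := by
    intro i j
    rw [← Real.sqrt_mul (mul_nonneg (hp i) (hs j)), ← Real.sqrt_mul (mul_nonneg (hp i) (hs i))]
    ring_nf
  have term2 : ∀ i j : Fin J, (Real.sqrt (p i * s j) - Real.sqrt (p j * s i)) ^ 2
      = p i * s j + p j * s i - 2 * (Real.sqrt (p i * s i) * Real.sqrt (p j * s j)) := by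
    intro i j
    have e1 := Real.sq_sqrt (mul_nonneg (hp i) (hs j))
    have e2 := Real.sq_sqrt (mul_nonneg (hp j) (hs i))
    have e3 := sqrtmul i j
    nlinarith [e1, e2, e3]
  have S2 : ∑ i, ∑ j, (Real.sqrt (p i * s j) - Real.sqrt (p j * s i)) ^ 2
      = 2 * ((∑ i, p i) * (∑ i, s i)) - 2 * C ^ 2 := by
    simp only [term2, Finset.sum_add_distrib, Finset.sum_sub_distrib,
      ← Finset.sum_mul, ← Finset.mul_sum, hC]
    ring
  have term1 : ∀ i j : Fin J, (p i * s j - p j * s i) ^ 2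
      = p i ^ 2 * s j ^ 2 + p j ^ 2 * s i ^ 2 - 2 * ((p i * s i) * (p j * s j)) := by
    intro i j; ring
  have S1 : ∑ i, ∑ j, (p i * s j - p j * s i) ^ 2 = 2 * (A * B) - 2 * D ^ 2 := by
    simp only [term1, Finset.sum_add_distrib, Finset.sum_sub_distrib,
      ← Finset.sum_mul, ← Finset.mul_sum, hA, hB, hD]
    ring
  have hsum : 2 * (A * B) - 2 * D ^ 2 ≤
      (2 * ((∑ i, p i) * (∑ i, s i)) - 2 * C ^ 2) * (Real.sqrt (A * B) + D) := by
    rw [← S1, ← S2, Finset.sum_mul]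
    apply Finset.sum_le_sum
    intro i _
    rw [Finset.sum_mul]
    exact Finset.sum_le_sum fun j _ => perterm i j
  have hL0 : 0 ≤ (∑ i, p i) * (∑ i, s i) - C ^ 2 := by
    have : 0 ≤ ∑ i, ∑ j, (Real.sqrt (p i * s j) - Real.sqrt (p j * s i)) ^ 2 :=
      Finset.sum_nonneg fun i _ => Finset.sum_nonneg fun j _ => sq_nonneg _
    rw [S2] at this; linarith
  rcases lt_or_eq_of_le (by positivity : (0:ℝ) ≤ Real.sqrt (A * B) + D) with hpos | hzero
  · have h4 : (Real.sqrt (A * B) - D) * (Real.sqrt (A * B) + D) ≤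
        ((∑ i, p i) * (∑ i, s i) - C ^ 2) * (Real.sqrt (A * B) + D) := by
      nlinarith [hsum, hRsq]
    have := le_of_mul_le_mul_right h4 hpos
    linarith
  · have h5 : Real.sqrt (A * B) = 0 := by linarith [hR0, hD0]
    have h6 : D = 0 := by linarith [hR0, hD0]
    rw [h5, h6]; linarith
end helpers

open Finset in
theorem subgaussian_ggd_ilrma_majorization
    (N J : ℕ) (hJ : 1 ≤ J)
    (x : Fin J → Fin N → ℂ) (r : Fin J → ℝ) (hr : ∀ j, 0 < r j)
    (wt : Fin N → ℂ)
    (H : Matrix (Fin N) (Fin J) ℂ)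
    (hH : ∀ i j, H i j = (1 / (r j) : ℝ) * x j i)
    (qt : Fin J → ℂ) (hqt : qt = H.conjTranspose.mulVec wt) (hqt0 : qt ≠ 0)
    (Qt : Matrix (Fin J) (Fin J) ℂ)
    (hQt : ∀ i j, Qt i j =
      if i = j then ((∑ k, ‖qt k‖ ^ 2 : ℝ) : ℂ)
      else -(qt i * star (qt j)))
    (G : Matrix (Fin N) (Fin N) ℂ)
    (hG : G = ((1 / Real.sqrt (J * ∑ j, ‖qt j‖ ^ 4) : ℝ) : ℂ) •
      (H * Qt * H.conjTranspose)) :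
    (∀ w : Fin N → ℂ,
      (1 / J : ℝ) * ∑ j, ‖star w ⬝ᵥ x j‖ ^ 4 / (r j) ^ 4 ≤
        ((star w ⬝ᵥ G.mulVec w).re) ^ 2) ∧
    (1 / J : ℝ) * ∑ j, ‖star wt ⬝ᵥ x j‖ ^ 4 / (r j) ^ 4 =
      ((star wt ⬝ᵥ G.mulVec wt).re) ^ 2 := by
  set S : ℝ := ∑ k, ‖qt k‖ ^ 2 with hS
  set B : ℝ := ∑ j, ‖qt j‖ ^ 4 with hBdef
  have hJ0 : (0:ℝ) < J := by exact_mod_cast hJ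
  have hB0 : (0:ℝ) < B := by
    obtain ⟨j0, hj0⟩ := Function.ne_iff.mp hqt0
    exact Finset.sum_pos' (fun j _ => by positivity)
      ⟨j0, Finset.mem_univ _, pow_pos (norm_pos_iff.mpr hj0) 4⟩
  set c : ℝ := 1 / Real.sqrt (J * B) with hc
  have hJB : (0:ℝ) < (J:ℝ) * B := mul_pos hJ0 hB0
  have hc0 : 0 < c := by
    rw [hc]; exact div_pos one_pos (Real.sqrt_pos.mpr hJB)
  have hc2 : c ^ 2 = 1 / ((J:ℝ) * B) := by
    rw [hc, div_pow, one_pow, Real.sq_sqrt hJB.le]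
  -- star z * z and z * star z
  have hzz : ∀ z : ℂ, star z * z = ((‖z‖ ^ 2 : ℝ) : ℂ) := by
    intro z
    rw [Complex.star_def, mul_comm, Complex.mul_conj, Complex.sq_norm]
  have hzz' : ∀ z : ℂ, z * star z = ((‖z‖ ^ 2 : ℝ) : ℂ) := by
    intro z; rw [mul_comm]; exact hzz z
  -- quadratic form evaluation
  have hquad : ∀ w : Fin N → ℂ,
      (star w ⬝ᵥ G.mulVec w) =
      ((c * (S * (∑ i, ‖(H.conjTranspose.mulVec w) i‖ ^ 2)
        + (∑ i, ‖(H.conjTranspose.mulVec w) i‖ ^ 2 * ‖qt i‖ ^ 2)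
        - ‖∑ i, star ((H.conjTranspose.mulVec w) i) * qt i‖ ^ 2) : ℝ) : ℂ) := by
    intro w
    set q := H.conjTranspose.mulVec w with hq
    have h1 : star w ⬝ᵥ (H * Qt * H.conjTranspose).mulVec w = star q ⬝ᵥ Qt.mulVec q := by
      rw [← Matrix.mulVec_mulVec, ← Matrix.mulVec_mulVec, Matrix.dotProduct_mulVec]
      congr 1
      rw [hq, Matrix.star_mulVec, Matrix.conjTranspose_conjTranspose]
    have e : ∀ i j : Fin J, star (q i) * (Qt i j * q j) =
        (if j = i then (star (q i) * q i) * ((S:ℂ) + qt i * star (qt i)) else 0)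
        - (star (q i) * qt i) * (star (qt j) * q j) := by
      intro i j
      rcases eq_or_ne j i with rfl | h
      · simp only [hQt, if_pos rfl, if_true]
        ring
      · have h' : i ≠ j := fun hh => h hh.symm
        simp only [hQt, if_neg h', if_neg h]
        ring
    have h2 : star q ⬝ᵥ Qt.mulVec q =
        (S:ℂ) * (∑ i, star (q i) * q i) + (∑ i, (star (q i) * q i) * (qt i * star (qt i)))
        - (∑ i, star (q i) * qt i) * (∑ j, star (qt j) * q j) := by
      have lhs1 : star q ⬝ᵥ Qt.mulVec q = ∑ i, ∑ j, star (q i) * (Qt i j * q j) := by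
        simp [dotProduct, Matrix.mulVec, Finset.mul_sum]
      rw [lhs1]
      simp only [e, Finset.sum_sub_distrib]
      congr 1
      · simp only [Finset.sum_ite_eq', Finset.mem_univ, if_true]
        rw [Finset.mul_sum, ← Finset.sum_add_distrib]
        apply Finset.sum_congr rfl
        intros; ring
      · simp only [← Finset.mul_sum]
        rw [← Finset.sum_mul]
    have hTstar : (∑ j, star (qt j) * q j) = star (∑ i, star (q i) * qt i) := by
      rw [star_sum]
      apply Finset.sum_congr rfl
      intro i _
      simp [mul_comm]
    rw [hG, Matrix.smul_mulVec, dotProduct_smul, h1, h2, hTstar]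
    simp only [hzz, hzz', smul_eq_mul]
    push_cast
    ring
  have habs : ∀ w : Fin N → ℂ, ∀ j, ‖(H.conjTranspose.mulVec w) j‖
      = ‖star w ⬝ᵥ x j‖ / r j := by
    intro w j
    have hterm : ∀ i, star (H i j) * w i = ((1/(r j) : ℝ) : ℂ) * (star (x j i) * w i) := by
      intro i
      rw [hH i j, star_mul', Complex.star_def, Complex.conj_ofReal]
      ring
    have hst : star (star w ⬝ᵥ x j) = ∑ i, star (x j i) * w i := by
      simp only [dotProduct, star_sum, star_mul', star_star, Pi.star_apply]
      apply Finset.sum_congr rfl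
      intros; ring
    have hval : (H.conjTranspose.mulVec w) j = ((1/(r j) : ℝ) : ℂ) * star (star w ⬝ᵥ x j) := by
      rw [hst, Finset.mul_sum]
      simp only [Matrix.mulVec, dotProduct, Matrix.conjTranspose_apply, Pi.star_apply]
      exact Finset.sum_congr rfl fun i _ => hterm i
    rw [hval, norm_mul, Complex.norm_real, Real.norm_eq_abs,
      abs_of_pos (div_pos one_pos (hr j)), Complex.star_def, Complex.norm_conj,
      one_div, inv_mul_eq_div]
  have hS0 : 0 ≤ S := Finset.sum_nonneg fun i _ => sq_nonneg _
  constructor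
  · intro w
    set q := H.conjTranspose.mulVec w with hq
    have hcore := core_ineq (fun j => ‖q j‖ ^ 2) (fun j => ‖qt j‖ ^ 2)
      (fun i => sq_nonneg _) (fun i => sq_nonneg _)
    set A : ℝ := ∑ i, (‖q i‖ ^ 2) ^ 2 with hA
    have hA0 : 0 ≤ A := Finset.sum_nonneg fun i _ => sq_nonneg _
    have hBs : B = ∑ i, (‖qt i‖ ^ 2) ^ 2 := by
      rw [hBdef]
      exact Finset.sum_congr rfl fun i _ => by ring
    have hSs : S = ∑ i, ‖qt i‖ ^ 2 := hS
    set T := ∑ i, star (q i) * qt i with hT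
    have hTle : ‖T‖ ≤ ∑ i, Real.sqrt (‖q i‖ ^ 2 * ‖qt i‖ ^ 2) := by
      calc ‖T‖ ≤ ∑ i, ‖star (q i) * qt i‖ :=
            norm_sum_le _ _
        _ = ∑ i, Real.sqrt (‖q i‖ ^ 2 * ‖qt i‖ ^ 2) := by
            apply Finset.sum_congr rfl
            intro i _
            rw [norm_mul, Complex.star_def, Complex.norm_conj,
              show ‖q i‖ ^ 2 * ‖qt i‖ ^ 2
                = (‖q i‖ * ‖qt i‖) ^ 2 by ring,
              Real.sqrt_sq (by positivity)]
    have hT2 : ‖T‖ ^ 2 ≤ (∑ i, Real.sqrt (‖q i‖ ^ 2 * ‖qt i‖ ^ 2)) ^ 2 :=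
      pow_le_pow_left₀ (norm_nonneg T) hTle 2
    have hRge : Real.sqrt (A * B) ≤
        S * (∑ i, ‖q i‖ ^ 2) + (∑ i, ‖q i‖ ^ 2 * ‖qt i‖ ^ 2)
          - ‖T‖ ^ 2 := by
      rw [hA, hBs, hSs]
      have := hcore
      nlinarith [hT2, this]
    have hR0 : 0 ≤ S * (∑ i, ‖q i‖ ^ 2)
        + (∑ i, ‖q i‖ ^ 2 * ‖qt i‖ ^ 2) - ‖T‖ ^ 2 :=
      le_trans (Real.sqrt_nonneg _) hRge
    have hLHS : (1 / J : ℝ) * ∑ j, ‖star w ⬝ᵥ x j‖ ^ 4 / r j ^ 4 = A / J := by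
      rw [hA, one_div, inv_mul_eq_div]
      congr 1
      apply Finset.sum_congr rfl
      intro j _
      rw [hq, habs w j, div_pow]
      ring
    rw [hquad w, Complex.ofReal_re]
    rw [← hq, ← hT, hLHS]
    have h6 : Real.sqrt (A * B) ^ 2 ≤
        (S * (∑ i, ‖q i‖ ^ 2)
          + (∑ i, ‖q i‖ ^ 2 * ‖qt i‖ ^ 2) - ‖T‖ ^ 2) ^ 2 :=
      pow_le_pow_left₀ (Real.sqrt_nonneg _) hRge 2
    rw [Real.sq_sqrt (mul_nonneg hA0 hB0.le)] at h6
    have hfin : A / J = c ^ 2 * (A * B) := by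
      rw [hc2]
      field_simp
    calc A / J = c ^ 2 * (A * B) := hfin
      _ ≤ c ^ 2 * ((S * (∑ i, ‖q i‖ ^ 2)
          + (∑ i, ‖q i‖ ^ 2 * ‖qt i‖ ^ 2) - ‖T‖ ^ 2)) ^ 2 := by
          nlinarith [sq_nonneg c, h6]
      _ = (c * (S * (∑ i, ‖q i‖ ^ 2)
          + (∑ i, ‖q i‖ ^ 2 * ‖qt i‖ ^ 2) - ‖T‖ ^ 2)) ^ 2 := by
          ring
  · have hqwt : H.conjTranspose.mulVec wt = qt := hqt.symm
    have hquadwt := hquad wt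
    rw [hqwt] at hquadwt
    have hTeq : (∑ i, star (qt i) * qt i) = ((S : ℝ) : ℂ) := by
      simp only [hzz, hS]
      push_cast
      rfl
    rw [hTeq] at hquadwt
    have habsS : ‖((S : ℝ) : ℂ)‖ = S := by
      rw [Complex.norm_real, Real.norm_eq_abs, abs_of_nonneg hS0]
    rw [habsS] at hquadwt
    have hsum4 : (∑ i, ‖qt i‖ ^ 2 * ‖qt i‖ ^ 2) = B := by
      rw [hBdef]
      exact Finset.sum_congr rfl fun i _ => by ring
    have hval : c * (S * (∑ i, ‖qt i‖ ^ 2)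
        + (∑ i, ‖qt i‖ ^ 2 * ‖qt i‖ ^ 2) - S ^ 2) = c * B := by
      rw [hsum4, ← hS]
      ring
    rw [hquadwt, Complex.ofReal_re, hval]
    have hLHS : (1 / J : ℝ) * ∑ j, ‖star wt ⬝ᵥ x j‖ ^ 4 / r j ^ 4 = B / J := by
      rw [hBdef, one_div, inv_mul_eq_div]
      congr 1
      apply Finset.sum_congr rfl
      intro j _
      have h8 := habs wt j
      rw [hqwt] at h8
      rw [h8, div_pow]
    rw [hLHS, show (c * B) ^ 2 = c ^ 2 * B ^ 2 from by ring, hc2]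
    field_simp
end
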